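/- Let p be a prime, q := p if p is odd and q := 4 if p = 2, let n ≥ 0, and let φ := φ(q·pⁿ) (Euler's totient), so φ = (p−1)pⁿ for p odd and φ = 2^{n+1} for p = 2. Let f be a positive multiple of q·pⁿ, let a and c be integers coprime to f with 1 ≤ a ≤ f and c odd, let a′ be the unique integer in [1,f] with a′·c ≡ a (mod f), and set λ := (a′·c − a)/f ∈ ℤ. Then the p-adic valuation of the integer (a′·c)^φ − a^φ is at least v_p(f·φ); the quotient ((a′·c)^φ − a^φ)/(f·φ) therefore lies in ℤ_p, and it satisfies ((a′·c)^φ − a^φ)/(f·φ) ≡ λ·a^{−1} (mod p^{n+1}·ℤ_p), where a^{−1} denotes the inverse of a in ℤ_p. -/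

import Mathlib

private lemma aux_three (j : ℕ) : j + 2 < 3 ^ (j + 1) := by
  induction j with
  | zero => norm_num
  | succ m ih =>
    have h : 3 ^ (m + 1 + 1) = 3 ^ (m + 1) * 3 := pow_succ 3 (m + 1)
    have := ih
    omega

private lemma aux_vk (p : ℕ) [hp : Fact p.Prime] (ε j : ℕ) (hε : p = 2 → 1 ≤ ε) :
    padicValNat p (j + 2) ≤ j + (j + 1) * ε := by
  have hple : p ^ padicValNat p (j + 2) ∣ j + 2 := pow_padicValNat_dvd
  have hle : p ^ padicValNat p (j + 2) ≤ j + 2 := Nat.le_of_dvd (by omega) hple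
  by_cases h2 : p = 2
  · subst h2
    have h1 : padicValNat 2 (j + 2) ≤ j + 1 := by
      by_contra h
      push_neg at h
      have h3 : 2 ^ (j + 2) ≤ 2 ^ padicValNat 2 (j + 2) := Nat.pow_le_pow_right (by norm_num) h
      have h4 := Nat.lt_two_pow_self (n := j + 2)
      omega
    have h5 : 1 ≤ ε := hε rfl
    have h6 : (j + 1) * 1 ≤ (j + 1) * ε := Nat.mul_le_mul_left _ h5
    omega
  · have hp3 : 3 ≤ p := by
      have h := hp.out.two_le
      rcases Nat.lt_or_ge p 3 with hlt | hge
      · interval_cases p <;> simp_all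
      · exact hge
    have h1 : padicValNat p (j + 2) ≤ j := by
      by_contra h
      push_neg at h
      have h3 : 3 ^ (j + 1) ≤ p ^ (j + 1) := Nat.pow_le_pow_left hp3 _
      have h4 : p ^ (j + 1) ≤ p ^ padicValNat p (j + 2) := Nat.pow_le_pow_right hp.out.one_lt.le h
      have h5 := aux_three j
      omega
    omega

private lemma aux_choose_val (p : ℕ) [hp : Fact p.Prime] (φ k : ℕ) (hk1 : 1 ≤ k) (hkφ : k ≤ φ) :
    padicValNat p φ ≤ padicValNat p (φ.choose k) + padicValNat p k := by
  have hid : φ * (φ - 1).choose (k - 1) = φ.choose k * k := by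
    have h := Nat.add_one_mul_choose_eq (φ - 1) (k - 1)
    have h1 : φ - 1 + 1 = φ := by omega
    have h2 : k - 1 + 1 = k := by omega
    rwa [h1, h2] at h
  have hφ0 : φ ≠ 0 := by omega
  have hC'0 : (φ - 1).choose (k - 1) ≠ 0 := (Nat.choose_pos (by omega)).ne'
  have hC0 : φ.choose k ≠ 0 := (Nat.choose_pos hkφ).ne'
  have e1 := padicValNat.mul (p := p) hφ0 hC'0
  have e2 := padicValNat.mul (p := p) hC0 (by omega : k ≠ 0)
  rw [hid] at e1
  omega

private lemma aux_term (p : ℕ) [hp : Fact p.Prime] (n ε φ f k : ℕ)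
    (hε : p = 2 → 1 ≤ ε) (hf : f ≠ 0)
    (hvφ : padicValNat p φ = n + ε) (hm0 : n + 1 + ε ≤ padicValNat p f)
    (hk2 : 2 ≤ k) (hkφ : k ≤ φ) :
    p ^ (padicValNat p f + (n + ε) + (n + 1)) ∣ f ^ k * φ.choose k := by
  have hφ0 : φ ≠ 0 := by omega
  have hC0 : φ.choose k ≠ 0 := (Nat.choose_pos hkφ).ne'
  have hne : f ^ k * φ.choose k ≠ 0 := Nat.mul_ne_zero (pow_ne_zero _ hf) hC0
  rw [Nat.Prime.pow_dvd_iff_le_factorization hp.out hne, Nat.factorization_def _ hp.out]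
  have hval : padicValNat p (f ^ k * φ.choose k)
      = k * padicValNat p f + padicValNat p (φ.choose k) := by
    rw [padicValNat.mul (pow_ne_zero _ hf) hC0, padicValNat.pow _ _]
  rw [hval]
  -- arithmetic
  obtain ⟨j, rfl⟩ : ∃ j, k = j + 2 := ⟨k - 2, by omega⟩
  have hvk : padicValNat p (j + 2) ≤ j + (j + 1) * ε := aux_vk p ε j hε
  have hcv := aux_choose_val p φ (j + 2) (by omega) hkφ
  rw [hvφ] at hcv
  have h1 : (j + 1) * (n + 1 + ε) ≤ (j + 1) * padicValNat p f :=
    Nat.mul_le_mul_left _ hm0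
  have h2 : (j + 1) * (n + 1 + ε) = (j + 1) * n + (j + 1) + (j + 1) * ε := by ring
  have h3 : n ≤ (j + 1) * n := Nat.le_mul_of_pos_left n (by omega)
  have h4 : (j + 2) * padicValNat p f = (j + 1) * padicValNat p f + padicValNat p f := by ring
  omega


private lemma aux_vphi (p : ℕ) [hp : Fact p.Prime] (m : ℕ) (hm : 0 < m) :
    0 < (p ^ m).totient ∧ padicValNat p ((p ^ m).totient) = m - 1 := by
  have hppos : 0 < p := hp.out.pos
  have htot : (p ^ m).totient = p ^ (m - 1) * (p - 1) := Nat.totient_prime_pow hp.out hm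
  have hp2 := hp.out.two_le
  have hp1 : p - 1 ≠ 0 := by omega
  have hnd : ¬ p ∣ p - 1 := by
    intro hdvd
    have := Nat.le_of_dvd (by omega) hdvd
    omega
  constructor
  · rw [htot]
    exact Nat.mul_pos (Nat.pow_pos hppos) (by omega)
  · rw [htot, padicValNat.mul (pow_ne_zero _ hppos.ne') hp1, padicValNat.prime_pow,
      padicValNat.eq_zero_of_not_dvd hnd]
    omega

private lemma aux_key (p : ℕ) [hp : Fact p.Prime] (n ε : ℕ) (hε : p = 2 → 1 ≤ ε)
    (φ f : ℕ) (hφ : φ = (p ^ (n + 1 + ε)).totient) (hf : 0 < f)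
    (hdvd : p ^ (n + 1 + ε) ∣ f)
    (A lam : ℤ) (hApow : (p : ℤ) ^ (n + 1) ∣ A ^ φ - 1) :
    (p : ℤ) ^ (padicValNat p f + (n + ε) + (n + 1)) ∣
      A * ((lam * (f : ℤ) + A) ^ φ - A ^ φ) - lam * (f : ℤ) * (φ : ℤ) := by
  obtain ⟨hφpos, hvφ0⟩ := aux_vphi p (n + 1 + ε) (by omega)
  rw [← hφ] at hφpos hvφ0
  have hvφ : padicValNat p φ = n + ε := by omega
  have hm0 : n + 1 + ε ≤ padicValNat p f := by
    have := (Nat.Prime.pow_dvd_iff_le_factorization hp.out hf.ne').mp hdvd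
    rwa [Nat.factorization_def _ hp.out] at this
  set x : ℤ := lam * (f : ℤ) with hx
  -- binomial expansion
  have hbin : (x + A) ^ φ = A ^ φ + x * A ^ (φ - 1) * (φ : ℤ)
      + ∑ k ∈ Finset.Ico 2 (φ + 1), x ^ k * A ^ (φ - k) * (φ.choose k : ℤ) := by
    rw [add_pow, Finset.range_eq_Ico, Finset.sum_eq_sum_Ico_succ_bot (by omega),
      Finset.sum_eq_sum_Ico_succ_bot (by omega)]
    simp only [pow_zero, Nat.sub_zero, Nat.choose_zero_right, Nat.cast_one, mul_one, one_mul,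
      pow_one, Nat.choose_one_right]
    norm_num [Nat.choose_one_right]
    ring
  have hAS : A * ∑ k ∈ Finset.Ico 2 (φ + 1), x ^ k * A ^ (φ - k) * (φ.choose k : ℤ)
      = ∑ k ∈ Finset.Ico 2 (φ + 1), x ^ k * A ^ (φ - k) * (φ.choose k : ℤ) * A := by
    rw [Finset.mul_sum]; exact Finset.sum_congr rfl fun k _ => by ring
  have hsplit : A * ((x + A) ^ φ - A ^ φ) - x * (φ : ℤ)
      = x * (φ : ℤ) * (A ^ (φ - 1) * A - 1)
        + ∑ k ∈ Finset.Ico 2 (φ + 1), x ^ k * A ^ (φ - k) * (φ.choose k : ℤ) * A := by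
    rw [hbin, ← hAS]; ring
  rw [show lam * (f : ℤ) * (φ : ℤ) = x * (φ : ℤ) from rfl, hsplit]
  apply dvd_add
  · -- first term
    have hApow' : (p : ℤ) ^ (n + 1) ∣ A ^ (φ - 1) * A - 1 := by
      rwa [← pow_succ, show φ - 1 + 1 = φ by omega]
    have h1 : (p : ℤ) ^ padicValNat p f ∣ (f : ℤ) := by
      exact_mod_cast Int.natCast_dvd_natCast.mpr (pow_padicValNat_dvd (p := p) (n := f))
    have h2 : (p : ℤ) ^ (n + ε) ∣ (φ : ℤ) := by
      have := pow_padicValNat_dvd (p := p) (n := φ)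
      rw [hvφ] at this
      exact_mod_cast Int.natCast_dvd_natCast.mpr this
    have h3 : (p : ℤ) ^ (padicValNat p f + (n + ε) + (n + 1)) ∣
        (f : ℤ) * (φ : ℤ) * (A ^ (φ - 1) * A - 1) := by
      rw [pow_add, pow_add]
      exact mul_dvd_mul (mul_dvd_mul h1 h2) hApow'
    have h4 := h3.mul_left lam
    convert h4 using 1
    rw [hx]; ring
  · apply Finset.dvd_sum
    intro k hk
    rw [Finset.mem_Ico] at hk
    have hnat := aux_term p n ε φ f k hε hf.ne' hvφ hm0 hk.1 (by omega)
    have hint : (p : ℤ) ^ (padicValNat p f + (n + ε) + (n + 1)) ∣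
        (f : ℤ) ^ k * (φ.choose k : ℤ) := by
      have := Int.natCast_dvd_natCast.mpr hnat
      push_cast at this
      exact this
    have heq : x ^ k * A ^ (φ - k) * (φ.choose k : ℤ) * A
        = ((f : ℤ) ^ k * (φ.choose k : ℤ)) * (lam ^ k * A ^ (φ - k) * A) := by
      rw [hx]; ring
    rw [heq]
    exact hint.mul_right _

theorem statement9 (p : ℕ) [Fact p.Prime] (n : ℕ)
    (q : ℕ) (hq : q = if p = 2 then 4 else p)
    (φ : ℕ) (hφ : φ = (q * p ^ n).totient)
    (f : ℕ) (hf : 0 < f) (hmul : q * p ^ n ∣ f)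
    (a c : ℕ) (ha1 : 1 ≤ a) (haf : a ≤ f) (ha : Nat.Coprime a f)
    (hc : Nat.Coprime c f) (hcodd : Odd c)
    -- `a'` is the unique integer in `[1,f]` with `a'·c ≡ a (mod f)`
    (a' : ℕ) (ha'1 : 1 ≤ a') (ha'f : a' ≤ f) (ha'c : a' * c ≡ a [MOD f])
    -- `lam = λ := (a'·c − a)/f ∈ ℤ`
    (lam : ℤ) (hlam : lam * f = (a' : ℤ) * c - a) :
    -- the p-adic valuation of `(a'·c)^φ − a^φ` is at least `v_p(f·φ)`
    ((p : ℤ) ^ padicValNat p (f * φ) ∣ ((a' : ℤ) * c) ^ φ - (a : ℤ) ^ φ) ∧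
    -- the quotient lies in `ℤ_p` and is `≡ λ·a⁻¹ (mod p^{n+1}·ℤ_p)`
    ∃ z : ℤ_[p],
      (z : ℚ_[p]) = ((((a' : ℤ) * c) ^ φ - (a : ℤ) ^ φ : ℤ) : ℚ_[p]) / ((f * φ : ℕ) : ℚ_[p]) ∧
      ∃ t : ℤ_[p], z - (lam : ℤ_[p]) * (PadicInt.inv (a : ℤ_[p])) = (p : ℤ_[p]) ^ (n + 1) * t := by
  have hp := (Fact.out : p.Prime)
  have hp2 := hp.two_le
  -- uniform setup with ε
  set ε : ℕ := if p = 2 then 1 else 0 with hε_def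
  have hε : p = 2 → 1 ≤ ε := fun h => by simp [hε_def, h]
  have hqpe : q * p ^ n = p ^ (n + 1 + ε) := by
    by_cases h2 : p = 2
    · have hε1 : ε = 1 := by simp [hε_def, h2]
      rw [hq, if_pos h2, hε1, h2]
      have hpow : (2 : ℕ) ^ (n + 1 + 1) = 2 ^ n * 4 := by
        rw [show n + 1 + 1 = n + 2 by omega, pow_add]
        norm_num
      rw [hpow]
      ring
    · have hε0 : ε = 0 := by simp [hε_def, h2]
      rw [hq, if_neg h2, hε0, show n + 1 + 0 = n + 1 by omega, pow_succ]
      ring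
  have hφ' : φ = (p ^ (n + 1 + ε)).totient := by rw [hφ, hqpe]
  have hdvdf : p ^ (n + 1 + ε) ∣ f := hqpe ▸ hmul
  obtain ⟨hφpos, hvφ0⟩ := aux_vphi p (n + 1 + ε) (by omega)
  rw [← hφ'] at hφpos hvφ0
  have hvφ : padicValNat p φ = n + ε := by omega
  -- p does not divide a
  have hpf : p ∣ f := dvd_trans (dvd_pow_self p (by omega : n + 1 + ε ≠ 0)) hdvdf
  have hpa : ¬ p ∣ a := by
    intro h
    have hd := Nat.dvd_gcd h hpf
    rw [Nat.Coprime] at ha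
    rw [ha] at hd
    exact absurd (Nat.le_of_dvd one_pos hd) (by omega)
  -- Euler's theorem
  have hApow : (p : ℤ) ^ (n + 1) ∣ (a : ℤ) ^ φ - 1 := by
    have hcop : Nat.Coprime a (q * p ^ n) := Nat.Coprime.coprime_dvd_right hmul ha
    have heuler : a ^ φ ≡ 1 [MOD q * p ^ n] := by
      rw [hφ]; exact Nat.ModEq.pow_totient hcop
    have hdl : ((q * p ^ n : ℕ) : ℤ) ∣ (1 : ℤ) - (a : ℤ) ^ φ := by
      have h := heuler.dvd
      push_cast at h ⊢
      exact_mod_cast h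
    have hd2 : ((q * p ^ n : ℕ) : ℤ) ∣ (a : ℤ) ^ φ - 1 := by
      rw [show (a : ℤ) ^ φ - 1 = -((1 : ℤ) - (a : ℤ) ^ φ) by ring]
      exact hdl.neg_right
    have hcast : ((q * p ^ n : ℕ) : ℤ) = (p : ℤ) ^ (n + 1 + ε) := by
      rw [hqpe]; push_cast; ring
    rw [hcast] at hd2
    exact dvd_trans (pow_dvd_pow _ (by omega)) hd2
  -- the key divisibility
  have hB : (a' : ℤ) * c = lam * (f : ℤ) + (a : ℤ) := by linarith [hlam]
  have key := aux_key p n ε hε φ f hφ' hf hdvdf (a : ℤ) lam hApow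
  rw [← hB] at key
  have hV : padicValNat p (f * φ) = padicValNat p f + (n + ε) :=  by
    rw [padicValNat.mul hf.ne' hφpos.ne', hvφ]
  set V := padicValNat p (f * φ) with hV_def
  set D : ℤ := ((a' : ℤ) * c) ^ φ - (a : ℤ) ^ φ with hD_def
  rw [show padicValNat p f + (n + ε) + (n + 1) = V + (n + 1) by omega] at key
  -- p^V divides lam * f * φ
  have hNdvd : (p : ℤ) ^ V ∣ ((f * φ : ℕ) : ℤ) := by
    exact_mod_cast Int.natCast_dvd_natCast.mpr (pow_padicValNat_dvd (p := p) (n := f * φ))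
  have hlamN : lam * (f : ℤ) * (φ : ℤ) = lam * ((f * φ : ℕ) : ℤ) := by push_cast; ring
  have hdvd2 : (p : ℤ) ^ V ∣ lam * (f : ℤ) * (φ : ℤ) := by
    rw [hlamN]; exact hNdvd.mul_left lam
  -- part 1
  have haD : (p : ℤ) ^ V ∣ (a : ℤ) * D := by
    have h1 : (p : ℤ) ^ V ∣ (a : ℤ) * D - lam * (f : ℤ) * (φ : ℤ) :=
      dvd_trans (pow_dvd_pow _ (by omega)) key
    have := dvd_add h1 hdvd2
    simpa using this
  have hcopa : IsCoprime ((p : ℤ) ^ V) (a : ℤ) := by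
    have h1 : Nat.Coprime p a := (Nat.Prime.coprime_iff_not_dvd hp).mpr hpa
    exact (Nat.isCoprime_iff_coprime.mpr h1).pow_left
  have part1 : (p : ℤ) ^ V ∣ D := hcopa.dvd_of_dvd_mul_left haD
  refine ⟨part1, ?_⟩
  -- part 2
  have hN0 : f * φ ≠ 0 := Nat.mul_ne_zero hf.ne' hφpos.ne'
  set u : ℕ := (f * φ) / p ^ V with hu_def
  have hNu : p ^ V * u = f * φ := by
    have := Nat.ordProj_mul_ordCompl_eq_self (f * φ) p
    rwa [Nat.factorization_def _ hp] at this
  have hpu : ¬ p ∣ u := by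
    have := Nat.not_dvd_ordCompl hp hN0
    rwa [Nat.factorization_def _ hp] at this
  -- u is a unit in ℤ_p
  have hnorm_of_not_dvd : ∀ m : ℕ, ¬ p ∣ m → ‖(m : ℤ_[p])‖ = 1 := by
    intro m hm
    apply le_antisymm (PadicInt.norm_le_one _)
    by_contra hlt
    push_neg at hlt
    have : ‖((m : ℤ) : ℤ_[p])‖ < 1 := by push_cast; exact hlt
    rw [PadicInt.norm_int_lt_one_iff_dvd] at this
    exact hm (by exact_mod_cast this)
  have hu_unit : IsUnit (u : ℤ_[p]) := PadicInt.isUnit_iff.mpr (hnorm_of_not_dvd u hpu)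
  obtain ⟨U, hU⟩ := hu_unit
  obtain ⟨d0, hd0⟩ := part1
  obtain ⟨w0, hw0⟩ := key
  set z : ℤ_[p] := (d0 : ℤ_[p]) * (↑(U⁻¹) : ℤ_[p]) with hz_def
  have hUu : (↑(U⁻¹) : ℤ_[p]) * (u : ℤ_[p]) = 1 := by rw [← hU]; exact U.inv_mul
  have hNz : ((f * φ : ℕ) : ℤ_[p]) * z = ((D : ℤ) : ℤ_[p]) := by
    have hd0' : ((D : ℤ) : ℤ_[p]) = (p : ℤ_[p]) ^ V * (d0 : ℤ_[p]) := by
      rw [hd0]; push_cast; ring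
    have hNu' : ((f * φ : ℕ) : ℤ_[p]) = (p : ℤ_[p]) ^ V * (u : ℤ_[p]) := by
      rw [← hNu]; push_cast; ring
    rw [hNu', hd0', hz_def]
    calc (p : ℤ_[p]) ^ V * (u : ℤ_[p]) * ((d0 : ℤ_[p]) * (↑(U⁻¹) : ℤ_[p]))
        = (p : ℤ_[p]) ^ V * (d0 : ℤ_[p]) * ((↑(U⁻¹) : ℤ_[p]) * (u : ℤ_[p])) := by ring
      _ = (p : ℤ_[p]) ^ V * (d0 : ℤ_[p]) := by rw [hUu, mul_one]
  refine ⟨z, ?_, ?_⟩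
  · -- the quotient identity in ℚ_p
    have hcast := congrArg (fun w : ℤ_[p] => (w : ℚ_[p])) hNz
    simp only [PadicInt.coe_mul] at hcast
    have hN0' : ((f * φ : ℕ) : ℚ_[p]) ≠ 0 := Nat.cast_ne_zero.mpr hN0
    rw [eq_div_iff hN0']
    calc (z : ℚ_[p]) * ((f * φ : ℕ) : ℚ_[p])
        = (((f * φ : ℕ) : ℤ_[p]) : ℚ_[p]) * (z : ℚ_[p]) := by push_cast; ring
      _ = ((((D : ℤ) : ℤ_[p])) : ℚ_[p]) := hcast
      _ = ((D : ℤ) : ℚ_[p]) := by push_cast; ring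
  · -- the congruence
    have hanorm : ‖((a : ℕ) : ℤ_[p])‖ = 1 := hnorm_of_not_dvd a hpa
    have hainv : (PadicInt.inv (a : ℤ_[p])) * ((a : ℕ) : ℤ_[p]) = 1 :=
      PadicInt.inv_mul hanorm
    -- transfer key equation into ℤ_p
    have hw0' : ((a : ℕ) : ℤ_[p]) * ((D : ℤ) : ℤ_[p]) - (lam : ℤ_[p]) * ((f * φ : ℕ) : ℤ_[p])
        = (p : ℤ_[p]) ^ (V + (n + 1)) * (w0 : ℤ_[p]) := by
      have := congrArg (fun w : ℤ => ((w : ℤ_[p]))) hw0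
      push_cast at this ⊢
      convert this using 2 <;> push_cast <;> ring
    have hNu' : ((f * φ : ℕ) : ℤ_[p]) = (p : ℤ_[p]) ^ V * (u : ℤ_[p]) := by
      rw [← hNu]; push_cast; ring
    have hpne : ((p : ℤ_[p])) ^ V ≠ 0 :=
      pow_ne_zero _ (Nat.cast_ne_zero.mpr hp.ne_zero)
    have hcancel : (u : ℤ_[p]) * (((a : ℕ) : ℤ_[p]) * z - (lam : ℤ_[p]))
        = (p : ℤ_[p]) ^ (n + 1) * (w0 : ℤ_[p]) := by
      apply mul_left_cancel₀ hpne
      calc (p : ℤ_[p]) ^ V * ((u : ℤ_[p]) * (((a : ℕ) : ℤ_[p]) * z - (lam : ℤ_[p])))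
          = ((a : ℕ) : ℤ_[p]) * (((f * φ : ℕ) : ℤ_[p]) * z)
            - (lam : ℤ_[p]) * ((f * φ : ℕ) : ℤ_[p]) := by rw [hNu']; ring
        _ = ((a : ℕ) : ℤ_[p]) * ((D : ℤ) : ℤ_[p]) - (lam : ℤ_[p]) * ((f * φ : ℕ) : ℤ_[p]) := by
            rw [hNz]
        _ = (p : ℤ_[p]) ^ (V + (n + 1)) * (w0 : ℤ_[p]) := hw0'
        _ = (p : ℤ_[p]) ^ V * ((p : ℤ_[p]) ^ (n + 1) * (w0 : ℤ_[p])) := by rw [pow_add]; ring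
    refine ⟨PadicInt.inv (a : ℤ_[p]) * ((↑(U⁻¹) : ℤ_[p]) * (w0 : ℤ_[p])), ?_⟩
    have hstep : z - (lam : ℤ_[p]) * (PadicInt.inv (a : ℤ_[p]))
        = PadicInt.inv (a : ℤ_[p]) * ((↑(U⁻¹) : ℤ_[p])
            * ((u : ℤ_[p]) * (((a : ℕ) : ℤ_[p]) * z - (lam : ℤ_[p])))) := by
      linear_combination
        (-(PadicInt.inv (a : ℤ_[p]) * (((a : ℕ) : ℤ_[p]) * z - (lam : ℤ_[p])))) * hUu
        - z * hainv
    rw [hstep, hcancel]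
    ring
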